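/- Let A⁽¹⁾ ∈ ℝ^{s×s} also have all entries of absolute value at most c₃, and for drift stage values H⁽⁰⁾₁, …, H⁽⁰⁾_s with data (Z, t, h) define the first diffusion stage Ĥ := Z + h ∑_{j=1}^{s} A⁽¹⁾_{1j} a(t + c⁽⁰⁾_j h, H⁽⁰⁾_j). If 0 < h < 1/(s·c·c₃), then ‖Ĥ‖ ≤ (‖Z‖ + s·c₃·c·h)/(1 − s·c₃·c·h) and ‖Ĥ − Z‖ ≤ s·c₃·c·(1 + ‖Z‖)·h/(1 − s·c₃·c·h). (Estimates (42) and (47) for the first diffusion stage H⁽ᵏ⁾₁ of the SRK method, which is the same vector for every k.) -/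
import Mathlib


/-- Estimates (42) and (47): bounds on the first diffusion stage `H⁽ᵏ⁾₁` of the SRK method
(which is the same vector for every `k`). -/
theorem stmt_15 (s d : ℕ) (hs : 0 < s) (hd : 0 < d) (c c₃ : ℝ) (hc : 0 < c) (hc₃ : 0 < c₃)
    (a : ℝ → EuclideanSpace ℝ (Fin d) → EuclideanSpace ℝ (Fin d))
    (ha : ∀ t x, ‖a t x‖ ≤ c * (1 + ‖x‖))
    (A0 A1 : Fin s → Fin s → ℝ) (hA0 : ∀ i j, |A0 i j| ≤ c₃) (hA1 : ∀ i j, |A1 i j| ≤ c₃)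
    (c0 : Fin s → ℝ) (hc0 : ∀ j, |c0 j| ≤ c₃)
    (h : ℝ) (hh : 0 < h) (hh' : h < 1 / ((s : ℝ) * c * c₃))
    (t : ℝ) (Z : EuclideanSpace ℝ (Fin d))
    (H0 : Fin s → EuclideanSpace ℝ (Fin d))
    (hH0 : ∀ i, H0 i = Z + h • ∑ j, A0 i j • a (t + c0 j * h) (H0 j))
    (Hhat : EuclideanSpace ℝ (Fin d))
    (hHhat : Hhat = Z + h • ∑ j, A1 ⟨0, hs⟩ j • a (t + c0 j * h) (H0 j)) :
    ‖Hhat‖ ≤ (‖Z‖ + (s : ℝ) * c₃ * c * h) / (1 - (s : ℝ) * c₃ * c * h) ∧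
    ‖Hhat - Z‖ ≤ (s : ℝ) * c₃ * c * (1 + ‖Z‖) * h / (1 - (s : ℝ) * c₃ * c * h) := by
  have hsc : (0:ℝ) < s := by exact_mod_cast hs
  set q : ℝ := (s : ℝ) * c₃ * c * h with hqdef
  have hq : 0 < q := by positivity
  have hq1 : q < 1 := by
    rw [lt_div_iff₀ (by positivity)] at hh'
    nlinarith
  have hne : (Finset.univ : Finset (Fin s)).Nonempty := ⟨⟨0, hs⟩, Finset.mem_univ _⟩
  set M := Finset.sup' Finset.univ hne (fun j => ‖H0 j‖) with hMdef
  have hMj : ∀ j, ‖H0 j‖ ≤ M := fun j => Finset.le_sup' (fun j => ‖H0 j‖) (Finset.mem_univ j)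
  have hM0 : 0 ≤ M := le_trans (norm_nonneg _) (hMj ⟨0, hs⟩)
  have key : ∀ (B : Fin s → ℝ), (∀ j, |B j| ≤ c₃) →
      ‖h • ∑ j, B j • a (t + c0 j * h) (H0 j)‖ ≤ q * (1 + M) := by
    intro B hB
    rw [norm_smul, Real.norm_eq_abs, abs_of_pos hh]
    have hsum : ‖∑ j, B j • a (t + c0 j * h) (H0 j)‖ ≤ ∑ _j : Fin s, c₃ * (c * (1 + M)) := by
      refine (norm_sum_le _ _).trans (Finset.sum_le_sum fun j _ => ?_)
      rw [norm_smul, Real.norm_eq_abs]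
      have h1 : ‖a (t + c0 j * h) (H0 j)‖ ≤ c * (1 + M) := by
        refine (ha _ _).trans ?_
        have := hMj j; nlinarith
      have h2 := hB j
      have hn : 0 ≤ ‖a (t + c0 j * h) (H0 j)‖ := norm_nonneg _
      have habs : 0 ≤ |B j| := abs_nonneg _
      nlinarith
    rw [Finset.sum_const, Finset.card_univ, Fintype.card_fin, nsmul_eq_mul] at hsum
    calc h * ‖∑ j, B j • a (t + c0 j * h) (H0 j)‖
        ≤ h * ((s : ℝ) * (c₃ * (c * (1 + M)))) := by
          exact mul_le_mul_of_nonneg_left hsum hh.le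
      _ = q * (1 + M) := by rw [hqdef]; ring
  obtain ⟨i, _, hi⟩ := Finset.exists_mem_eq_sup' hne (fun j => ‖H0 j‖)
  have hMle : M ≤ ‖Z‖ + q * (1 + M) := by
    calc M = ‖H0 i‖ := hi
      _ = ‖Z + h • ∑ j, A0 i j • a (t + c0 j * h) (H0 j)‖ := by rw [← hH0 i]
      _ ≤ ‖Z‖ + ‖h • ∑ j, A0 i j • a (t + c0 j * h) (H0 j)‖ := norm_add_le _ _
      _ ≤ ‖Z‖ + q * (1 + M) := by linarith [key (A0 i) (hA0 i)]
  have hZM : (1 + M) * (1 - q) ≤ 1 + ‖Z‖ := by nlinarith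
  have hHd : ‖Hhat - Z‖ ≤ q * (1 + M) := by
    rw [hHhat, add_sub_cancel_left]
    exact key (A1 ⟨0, hs⟩) (hA1 ⟨0, hs⟩)
  have hHn : ‖Hhat‖ ≤ ‖Z‖ + q * (1 + M) := by
    calc ‖Hhat‖ = ‖Z + (Hhat - Z)‖ := by rw [add_sub_cancel]
      _ ≤ ‖Z‖ + ‖Hhat - Z‖ := norm_add_le _ _
      _ ≤ ‖Z‖ + q * (1 + M) := by linarith
  have h1q : 0 < 1 - q := by linarith
  constructor
  · rw [le_div_iff₀ h1q]
    nlinarith [norm_nonneg Z]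
  · rw [show (s : ℝ) * c₃ * c * (1 + ‖Z‖) * h = q * (1 + ‖Z‖) by rw [hqdef]; ring,
      le_div_iff₀ h1q]
    nlinarith [norm_nonneg Z, norm_nonneg (Hhat - Z)]
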